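/- (Kadison inequality.) Let Φ be a ℂ-linear map on n×n complex matrices which is unital (Φ(𝟙) = 𝟙) and completely positive, meaning that for every m ≥ 1 the entrywise amplification 𝟙ₘ ⊗ Φ, acting on (m·n)×(m·n) complex matrices viewed as m×m block matrices with n×n blocks by applying Φ to each block, maps positive semidefinite matrices to positive semidefinite matrices. Then for every n×n complex matrix F, the matrix Φ(F†F) − Φ(F†)Φ(F) is positive semidefinite. -/

import Mathlib

open Matrix
open scoped ComplexOrder

/-- Kadison inequality for unital completely positive maps on matrices. -/
theorem stmt19 {n : ℕ}
    (Φ : Matrix (Fin n) (Fin n) ℂ →ₗ[ℂ] Matrix (Fin n) (Fin n) ℂ)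
    (hunital : Φ 1 = 1)
    (hcp : ∀ m : ℕ, ∀ M : Matrix (Fin m × Fin n) (Fin m × Fin n) ℂ, M.PosSemidef →
      (Matrix.of fun p q : Fin m × Fin n =>
        Φ (Matrix.of fun k l : Fin n => M (p.1, k) (q.1, l)) p.2 q.2).PosSemidef)
    (F : Matrix (Fin n) (Fin n) ℂ) :
    (Φ (Fᴴ * F) - Φ Fᴴ * Φ F).PosSemidef := by
  classical
  -- the equivalence between `Fin 2 × Fin n` and `Fin n ⊕ Fin n`
  let e : Fin 2 × Fin n ≃ Fin n ⊕ Fin n :=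
    (Equiv.prodCongr finTwoEquiv (Equiv.refl (Fin n))).trans (Equiv.boolProdEquivSum (Fin n))
  have he0 : ∀ k : Fin n, e (0, k) = Sum.inl k := fun k => rfl
  have he1 : ∀ k : Fin n, e (1, k) = Sum.inr k := fun k => rfl
  -- the 2x2 block matrix [[FᴴF, Fᴴ],[F, 1]] is PSD
  have h1 : (1 : Matrix (Fin n) (Fin n) ℂ).PosDef := Matrix.PosDef.one
  haveI : Invertible (1 : Matrix (Fin n) (Fin n) ℂ) := invertibleOne
  have hblock : (fromBlocks (Fᴴ * F) Fᴴ F (1 : Matrix (Fin n) (Fin n) ℂ)).PosSemidef := by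
    have : (fromBlocks (Fᴴ * F) Fᴴ (Fᴴ)ᴴ (1 : Matrix (Fin n) (Fin n) ℂ)).PosSemidef := by
      rw [Matrix.PosDef.fromBlocks₂₂ _ _ h1]
      simp [Matrix.PosSemidef.zero]
    simpa using this
  -- pull back along `e` to get the PSD matrix indexed by `Fin 2 × Fin n`
  set M : Matrix (Fin 2 × Fin n) (Fin 2 × Fin n) ℂ :=
    (fromBlocks (Fᴴ * F) Fᴴ F (1 : Matrix (Fin n) (Fin n) ℂ)).submatrix e e with hM
  have hMpsd : M.PosSemidef := hblock.submatrix e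
  have hN := hcp 2 M hMpsd
  -- identify the amplified matrix with the block matrix of images
  have key : (Matrix.of fun p q : Fin 2 × Fin n =>
        Φ (Matrix.of fun k l : Fin n => M (p.1, k) (q.1, l)) p.2 q.2).submatrix e.symm e.symm
      = fromBlocks (Φ (Fᴴ * F)) (Φ Fᴴ) (Φ F) (1 : Matrix (Fin n) (Fin n) ℂ) := by
    ext i j
    cases i with
    | inl i =>
      cases j with
      | inl j =>
        have : e.symm (Sum.inl i) = ((0 : Fin 2), i) := by
          rw [← he0 i, Equiv.symm_apply_apply]
        have hj : e.symm (Sum.inl j) = ((0 : Fin 2), j) := by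
          rw [← he0 j, Equiv.symm_apply_apply]
        simp only [submatrix_apply, this, hj, of_apply, fromBlocks_apply₁₁]
        rw [show (Matrix.of fun k l : Fin n => M ((0 : Fin 2), k) ((0 : Fin 2), l)) = Fᴴ * F by
          ext k l; simp [hM, he0]]
      | inr j =>
        have : e.symm (Sum.inl i) = ((0 : Fin 2), i) := by
          rw [← he0 i, Equiv.symm_apply_apply]
        have hj : e.symm (Sum.inr j) = ((1 : Fin 2), j) := by
          rw [← he1 j, Equiv.symm_apply_apply]
        simp only [submatrix_apply, this, hj, of_apply, fromBlocks_apply₁₂]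
        rw [show (Matrix.of fun k l : Fin n => M ((0 : Fin 2), k) ((1 : Fin 2), l)) = Fᴴ by
          ext k l; simp [hM, he0, he1]]
    | inr i =>
      cases j with
      | inl j =>
        have : e.symm (Sum.inr i) = ((1 : Fin 2), i) := by
          rw [← he1 i, Equiv.symm_apply_apply]
        have hj : e.symm (Sum.inl j) = ((0 : Fin 2), j) := by
          rw [← he0 j, Equiv.symm_apply_apply]
        simp only [submatrix_apply, this, hj, of_apply, fromBlocks_apply₂₁]
        rw [show (Matrix.of fun k l : Fin n => M ((1 : Fin 2), k) ((0 : Fin 2), l)) = F by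
          ext k l; simp [hM, he0, he1]]
      | inr j =>
        have : e.symm (Sum.inr i) = ((1 : Fin 2), i) := by
          rw [← he1 i, Equiv.symm_apply_apply]
        have hj : e.symm (Sum.inr j) = ((1 : Fin 2), j) := by
          rw [← he1 j, Equiv.symm_apply_apply]
        simp only [submatrix_apply, this, hj, of_apply, fromBlocks_apply₂₂]
        rw [show (Matrix.of fun k l : Fin n => M ((1 : Fin 2), k) ((1 : Fin 2), l)) = 1 by
          ext k l; simp [hM, he1], hunital]
  have hfrom : (fromBlocks (Φ (Fᴴ * F)) (Φ Fᴴ) (Φ F) (1 : Matrix (Fin n) (Fin n) ℂ)).PosSemidef := by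
    rw [← key]; exact hN.submatrix e.symm
  -- from Hermitian-ness, Φ F = (Φ Fᴴ)ᴴ
  have hherm := hfrom.1
  rw [Matrix.isHermitian_fromBlocks_iff] at hherm
  have hC : Φ F = (Φ Fᴴ)ᴴ := hherm.2.1.symm
  rw [hC] at hfrom
  rw [Matrix.PosDef.fromBlocks₂₂ _ _ h1] at hfrom
  simpa [hC] using hfrom
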